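/- Let g : ℝⁿ → ℝⁿ be continuous, let A : ℝⁿ → ℝ^{n×n} be a continuous matrix-valued function, and define F : ℝⁿ ⇉ ℝⁿ by F(x) = { g(x) + A(x)·v : v ∈ Sign(x₁) × ⋯ × Sign(xₙ) }. Then for every ε > 0 there exists a locally Lipschitz function f_ε : ℝⁿ → ℝⁿ whose graph is contained in graph(F) + εB, where B is the closed unit ball of ℝⁿ × ℝⁿ. In other words, the piecewise-continuous right-hand side f(x) = g(x) + A(x)s(x), with s the componentwise signum, admits, after Filippov regularization, a locally Lipschitz continuous single-valued approximation to within any ε > 0. -/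

import Mathlib

open Set

/-- The set-valued signum map: `{-1}` for `x < 0`, `[-1, 1]` for `x = 0`, `{1}` for `x > 0`. -/
noncomputable def SignSet (x : ℝ) : Set ℝ :=
  if x < 0 then {-1} else if x = 0 then Set.Icc (-1) 1 else {1}

/-- The Filippov regularization `F(x) = g(x) + A(x)·(Sign(x₁) × ⋯ × Sign(xₙ))` of the
piecewise continuous right-hand side `g(x) + A(x)s(x)`. -/
def FilippovRHS {n : ℕ} (g : (Fin n → ℝ) → (Fin n → ℝ))
    (A : (Fin n → ℝ) → Matrix (Fin n) (Fin n) ℝ) (x : Fin n → ℝ) : Set (Fin n → ℝ) :=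
  {y | ∃ v : Fin n → ℝ, (∀ i, v i ∈ SignSet (x i)) ∧ y = g x + (A x).mulVec v}

/-- Sum of absolute values of all entries of a matrix. -/
noncomputable def matAbs {n : ℕ} (M : Matrix (Fin n) (Fin n) ℝ) : ℝ :=
  ∑ i, ∑ j, |M i j|

lemma matAbs_nonneg {n : ℕ} (M : Matrix (Fin n) (Fin n) ℝ) : 0 ≤ matAbs M :=
  Finset.sum_nonneg fun _ _ => Finset.sum_nonneg fun _ _ => abs_nonneg _

lemma matAbs_sub_le {n : ℕ} (M N P : Matrix (Fin n) (Fin n) ℝ) :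
    matAbs (M - P) ≤ matAbs (M - N) + matAbs (N - P) := by
  unfold matAbs
  rw [← Finset.sum_add_distrib]
  refine Finset.sum_le_sum fun i _ => ?_
  rw [← Finset.sum_add_distrib]
  refine Finset.sum_le_sum fun j _ => ?_
  have : (M - P) i j = (M - N) i j + (N - P) i j := by
    simp [Matrix.sub_apply]
  rw [this]
  exact abs_add_le _ _

lemma matAbs_sub_comm {n : ℕ} (M N : Matrix (Fin n) (Fin n) ℝ) :
    matAbs (M - N) = matAbs (N - M) := by
  unfold matAbs
  refine Finset.sum_congr rfl fun i _ => Finset.sum_congr rfl fun j _ => ?_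
  simp [Matrix.sub_apply, abs_sub_comm]

lemma norm_mulVec_le_matAbs {n : ℕ} (M : Matrix (Fin n) (Fin n) ℝ) (w : Fin n → ℝ)
    (hw : ‖w‖ ≤ 1) : ‖M.mulVec w‖ ≤ matAbs M := by
  rw [pi_norm_le_iff_of_nonneg (matAbs_nonneg M)]
  intro i
  have hwj : ∀ j, |w j| ≤ 1 := fun j => by
    have := norm_le_pi_norm w j
    rw [Real.norm_eq_abs] at this
    exact this.trans hw
  calc ‖M.mulVec w i‖ = |∑ j, M i j * w j| := by
        simp [Matrix.mulVec, dotProduct, Real.norm_eq_abs]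
    _ ≤ ∑ j, |M i j * w j| := Finset.abs_sum_le_sum_abs _ _
    _ ≤ ∑ j, |M i j| := Finset.sum_le_sum fun j _ => by
        rw [abs_mul]
        exact mul_le_of_le_one_right (abs_nonneg _) (hwj j)
    _ ≤ matAbs M := Finset.single_le_sum
        (f := fun i => ∑ j, |M i j|)
        (fun i _ => Finset.sum_nonneg fun _ _ => abs_nonneg _) (Finset.mem_univ i)

lemma continuous_matAbs {n : ℕ} : Continuous (matAbs (n := n)) := by
  unfold matAbs
  refine continuous_finset_sum _ fun i _ => continuous_finset_sum _ fun j _ => ?_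
  exact ((continuous_apply j).comp (continuous_apply i)).abs

open scoped Manifold

/-- The piecewise continuous right-hand side `g(x) + A(x)s(x)` admits, after Filippov
regularization, a locally Lipschitz single-valued approximation whose graph lies within
`ε` of the graph of `F`, for every `ε > 0`. -/
theorem filippovRHS_approximate_selection {n : ℕ}
    (g : (Fin n → ℝ) → (Fin n → ℝ)) (A : (Fin n → ℝ) → Matrix (Fin n) (Fin n) ℝ)
    (hg : Continuous g) (hA : Continuous A) (ε : ℝ) (hε : 0 < ε) :
    ∃ fε : (Fin n → ℝ) → (Fin n → ℝ), LocallyLipschitz fε ∧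
      ∀ x : Fin n → ℝ, ∃ x' y' : Fin n → ℝ, y' ∈ FilippovRHS g A x' ∧
        ‖((x, fε x) : (Fin n → ℝ) × (Fin n → ℝ)) - (x', y')‖ ≤ ε := by
  classical
  -- Step 1: a smooth positive "modulus of continuity" function δ.
  set t₁ : (Fin n → ℝ) → Set ℝ := fun x =>
    {d | 0 < d ∧ d ≤ ε ∧ ∀ x' : Fin n → ℝ, ‖x - x'‖ ≤ d →
      ‖g x - g x'‖ + matAbs (A x - A x') ≤ ε / 2} with ht₁def
  have ht₁conv : ∀ x, Convex ℝ (t₁ x) := by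
    intro x
    rw [convex_iff_ordConnected]
    constructor
    rintro d₁ ⟨hd₁0, _, _⟩ d₂ ⟨_, hd₂ε, hd₂⟩ z hz
    exact ⟨lt_of_lt_of_le hd₁0 hz.1, le_trans hz.2 hd₂ε,
      fun x' hx' => hd₂ x' (hx'.trans hz.2)⟩
  have hφ : ∀ x₀ : Fin n → ℝ,
      Continuous fun z => ‖g z - g x₀‖ + matAbs (A z - A x₀) := fun x₀ =>
    ((hg.sub continuous_const).norm).add
      (continuous_matAbs.comp (hA.sub continuous_const))
  have ht₁loc : ∀ x : Fin n → ℝ, ∃ c : ℝ, ∀ᶠ y in nhds x, c ∈ t₁ y := by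
    intro x
    have h0 : ‖g x - g x‖ + matAbs (A x - A x) = 0 := by
      simp [matAbs]
    have htend : Filter.Tendsto (fun z => ‖g z - g x‖ + matAbs (A z - A x))
        (nhds x) (nhds 0) := by
      have := (hφ x).tendsto x
      rwa [h0] at this
    have hev : ∀ᶠ z in nhds x, ‖g z - g x‖ + matAbs (A z - A x) < ε / 4 :=
      htend.eventually_lt_const (by positivity)
    obtain ⟨r, hr0, hr⟩ := Metric.eventually_nhds_iff.mp hev
    refine ⟨min (r / 4) ε, ?_⟩
    have hball : Metric.ball x (r / 4) ∈ nhds x := Metric.ball_mem_nhds x (by positivity)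
    filter_upwards [hball] with y hy
    have hyx : dist y x < r / 4 := hy
    refine ⟨lt_min (by positivity) hε, min_le_right _ _, ?_⟩
    intro x' hx'
    have hdx'y : dist x' y ≤ r / 4 := by
      rw [dist_comm, dist_eq_norm]
      exact hx'.trans (min_le_left _ _)
    have h1 : dist x' x < r := by
      calc dist x' x ≤ dist x' y + dist y x := dist_triangle _ _ _
        _ < r / 4 + r / 4 := by
            exact add_lt_add_of_le_of_lt hdx'y hyx
        _ ≤ r := by linarith
    have h2 : dist y x < r := lt_trans hyx (by linarith)
    have hgy := hr h2
    have hgx' := hr h1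
    have hgtri : ‖g y - g x'‖ ≤ ‖g y - g x‖ + ‖g x - g x'‖ := by
      calc ‖g y - g x'‖ = ‖(g y - g x) + (g x - g x')‖ := by rw [sub_add_sub_cancel]
        _ ≤ ‖g y - g x‖ + ‖g x - g x'‖ := norm_add_le _ _
    have hAtri : matAbs (A y - A x') ≤ matAbs (A y - A x) + matAbs (A x - A x') :=
      matAbs_sub_le _ _ _
    have e1 : ‖g x - g x'‖ = ‖g x' - g x‖ := norm_sub_rev _ _
    have e2 : matAbs (A x - A x') = matAbs (A x' - A x) := matAbs_sub_comm _ _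
    linarith
  obtain ⟨δ, hδ⟩ := exists_contMDiffMap_forall_mem_convex_of_local_const (n := (⊤ : ℕ∞))
    (𝓘(ℝ, Fin n → ℝ)) ht₁conv ht₁loc
  have hδ0 : ∀ x, 0 < δ x := fun x => (hδ x).1
  have hδε : ∀ x, δ x ≤ ε := fun x => (hδ x).2.1
  have hδc : Continuous fun x => (δ x : ℝ) := δ.contMDiff.continuous
  -- Step 2: the continuous approximate selection `h` with variable smoothing width `δ`.
  set v : (Fin n → ℝ) → (Fin n → ℝ) := fun x i => max (-1) (min 1 (x i / δ x)) with hvdef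
  have hvc : Continuous v := by
    refine continuous_pi fun i => ?_
    exact continuous_const.max (continuous_const.min
      ((continuous_apply i).div hδc fun x => (hδ0 x).ne'))
  set h : (Fin n → ℝ) → (Fin n → ℝ) := fun x => g x + (A x).mulVec (v x) with hhdef
  have hh : Continuous h := hg.add (hA.matrix_mulVec hvc)
  -- Step 3: smooth `f` uniformly `ε/2`-close to `h`.
  have ht₂conv : ∀ x : Fin n → ℝ, Convex ℝ (Metric.closedBall (h x) (ε / 2)) :=
    fun x => convex_closedBall _ _
  have ht₂loc : ∀ x : Fin n → ℝ, ∃ c : Fin n → ℝ,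
      ∀ᶠ y in nhds x, c ∈ Metric.closedBall (h y) (ε / 2) := by
    intro x
    refine ⟨h x, ?_⟩
    have := (hh.tendsto x) (Metric.closedBall_mem_nhds (h x) (half_pos hε))
    filter_upwards [this] with y hy
    simp only [Set.mem_preimage, Metric.mem_closedBall] at hy
    rw [Metric.mem_closedBall]
    rwa [dist_comm]
  obtain ⟨f, hf⟩ := exists_contMDiffMap_forall_mem_convex_of_local_const (n := (⊤ : ℕ∞))
    (𝓘(ℝ, Fin n → ℝ)) ht₂conv ht₂loc
  refine ⟨f, ?_, ?_⟩
  · have hcd : ContDiff ℝ 1 f := (contMDiff_iff_contDiff.mp f.contMDiff).of_le (mod_cast le_top)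
    exact hcd.locallyLipschitz
  intro x
  set x' : Fin n → ℝ := fun i => if |x i| < δ x then 0 else x i with hx'def
  have hv1 : ‖v x‖ ≤ 1 := by
    rw [pi_norm_le_iff_of_nonneg zero_le_one]
    intro i
    rw [Real.norm_eq_abs, abs_le]
    exact ⟨le_max_left _ _, max_le (by norm_num) (min_le_left _ _)⟩
  have hmem : ∀ i, v x i ∈ SignSet (x' i) := by
    intro i
    by_cases hi : |x i| < δ x
    · have hx'i : x' i = 0 := by simp [hx'def, hi]
      rw [hx'i]
      unfold SignSet
      rw [if_neg (lt_irrefl 0), if_pos rfl]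
      exact ⟨le_max_left _ _, max_le (by norm_num) (min_le_left _ _)⟩
    · push_neg at hi
      have hx'i : x' i = x i := by simp only [hx'def, if_neg (not_lt.mpr hi)]
      have hxne : x i ≠ 0 := by
        intro h0
        rw [h0, abs_zero] at hi
        exact absurd hi (not_le.mpr (hδ0 x))
      rcases lt_or_gt_of_ne hxne with hneg | hpos
      · have habs : δ x ≤ -x i := by rwa [abs_of_neg hneg] at hi
        have hdiv : x i / δ x ≤ -1 := by
          rw [div_le_iff₀ (hδ0 x)]
          linarith
        have : v x i = -1 := by
          rw [hvdef]
          simp only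
          rw [min_eq_right (hdiv.trans (by norm_num : (-1:ℝ) ≤ 1)), max_eq_left hdiv]
        rw [hx'i]
        unfold SignSet
        rw [if_pos hneg, this]
        exact rfl
      · have habs : δ x ≤ x i := by rwa [abs_of_pos hpos] at hi
        have hdiv : (1 : ℝ) ≤ x i / δ x := by
          rw [le_div_iff₀ (hδ0 x)]
          linarith
        have : v x i = 1 := by
          rw [hvdef]
          simp only
          rw [min_eq_left hdiv, max_eq_right (by norm_num : (-1:ℝ) ≤ 1)]
        rw [hx'i]
        unfold SignSet
        rw [if_neg (not_lt.mpr hpos.le), if_neg hxne, this]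
        exact rfl
  refine ⟨x', g x' + (A x').mulVec (v x), ⟨v x, hmem, rfl⟩, ?_⟩
  have hxx' : ‖x - x'‖ ≤ δ x := by
    rw [pi_norm_le_iff_of_nonneg (hδ0 x).le]
    intro i
    by_cases hi : |x i| < δ x
    · have : x' i = 0 := by simp [hx'def, hi]
      simp only [Pi.sub_apply, this, sub_zero, Real.norm_eq_abs]
      exact hi.le
    · have : x' i = x i := by simp [hx'def, not_lt.mpr (not_lt.mp hi)]
      simp [Pi.sub_apply, this, (hδ0 x).le]
  rw [norm_prod_le_iff]
  constructor
  · exact hxx'.trans (hδε x)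
  · show ‖f x - (g x' + (A x').mulVec (v x))‖ ≤ ε
    have h1 : ‖f x - h x‖ ≤ ε / 2 := by
      have := hf x
      rw [Metric.mem_closedBall, dist_eq_norm] at this
      exact this
    have key := (hδ x).2.2 x' hxx'
    have hsplit : h x - (g x' + (A x').mulVec (v x))
        = (g x - g x') + (A x - A x').mulVec (v x) := by
      rw [hhdef]
      simp only
      rw [Matrix.sub_mulVec]
      abel
    have h2 : ‖h x - (g x' + (A x').mulVec (v x))‖ ≤ ε / 2 := by
      rw [hsplit]
      calc ‖(g x - g x') + (A x - A x').mulVec (v x)‖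
          ≤ ‖g x - g x'‖ + ‖(A x - A x').mulVec (v x)‖ := norm_add_le _ _
        _ ≤ ‖g x - g x'‖ + matAbs (A x - A x') := by
            exact add_le_add le_rfl (norm_mulVec_le_matAbs _ _ hv1)
        _ ≤ ε / 2 := key
    calc ‖f x - (g x' + (A x').mulVec (v x))‖
        = ‖(f x - h x) + (h x - (g x' + (A x').mulVec (v x)))‖ := by
          rw [sub_add_sub_cancel]
      _ ≤ ‖f x - h x‖ + ‖h x - (g x' + (A x').mulVec (v x))‖ := norm_add_le _ _
      _ ≤ ε / 2 + ε / 2 := add_le_add h1 h2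
      _ = ε := by ring
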